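/- arXiv:1605.00291 — 2 statements merged into one kernel-verified Lean document; each statement's English description precedes it below -/
import Mathlib

section
/- For all complex q with |q| < 1, ((-q;q^2)_∞/(q^2;q^2)_∞) · ∑_{j≥0} q^{3j^2+2j}(1 - q^{2j+1}) equals ∑_{j≥0} q^{3j^2+2j} · ((-q;q^2)_j / (q^2;q^2)_{2j}) · ((-q^{2j+3};q^2)_∞ / (q^{4j+4};q^2)_∞). -/
noncomputable def qPoch (a q : ℂ) (n : ℕ) : ℂ := ∏ i ∈ Finset.range n, (1 - a * q ^ i)

noncomputable def qPochInf (a q : ℂ) : ℂ := ∏' i : ℕ, (1 - a * q ^ i)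

open Complex Filter

private lemma one_sub_ne' {z : ℂ} (h : ‖z‖ < 1) : 1 - z ≠ 0 := by
  intro hz
  have : (1 : ℂ) = z := by linear_combination hz
  rw [← this] at h; simp at h

private lemma summable_log_aux (a q : ℂ) (hq : ‖q‖ < 1) :
    Summable (fun i : ℕ => Complex.log (1 - a * q ^ i)) := by
  have htends : Tendsto (fun i : ℕ => ‖a * q ^ i‖) atTop (nhds 0) := by
    have h := (tendsto_pow_atTop_nhds_zero_of_lt_one (norm_nonneg q) hq).const_mul ‖a‖
    simpa [norm_mul, norm_pow] using h
  refine Summable.of_norm_bounded_eventually_nat (g := fun i => 3 / 2 * (‖a‖ * ‖q‖ ^ i)) ?_ ?_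
  · exact ((summable_geometric_of_lt_one (norm_nonneg q) hq).mul_left ‖a‖).mul_left (3 / 2)
  · filter_upwards [htends.eventually (eventually_le_nhds (by norm_num : (0:ℝ) < 1/2))] with i hi
    have h1 : (1 : ℂ) - a * q ^ i = 1 + (-(a * q ^ i)) := by ring
    rw [h1]
    have := Complex.norm_log_one_add_half_le_self (z := -(a * q ^ i)) (by simpa using hi)
    simpa [norm_mul, norm_pow] using this

private lemma hasProd_aux (a q : ℂ) (hq : ‖q‖ < 1) (ha : ∀ i : ℕ, 1 - a * q ^ i ≠ 0) :
    HasProd (fun i : ℕ => 1 - a * q ^ i)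
      (Complex.exp (∑' i : ℕ, Complex.log (1 - a * q ^ i))) := by
  have h := (summable_log_aux a q hq).hasSum.cexp
  have he : (cexp ∘ fun i : ℕ => Complex.log (1 - a * q ^ i)) = fun i : ℕ => 1 - a * q ^ i :=
    funext fun i => Complex.exp_log (ha i)
  rwa [he] at h

private lemma ha_of {a q : ℂ} (ha : ‖a‖ < 1) (hq : ‖q‖ ≤ 1) :
    ∀ i : ℕ, 1 - a * q ^ i ≠ 0 := by
  intro i
  refine one_sub_ne' ?_
  calc ‖a * q ^ i‖ = ‖a‖ * ‖q‖ ^ i := by rw [norm_mul, norm_pow]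
    _ ≤ ‖a‖ * 1 := by
        gcongr
        exact pow_le_one₀ (norm_nonneg q) hq
    _ < 1 := by simpa using ha

private lemma qPochInf_ne_zero {a q : ℂ} (hq : ‖q‖ < 1) (ha : ∀ i : ℕ, 1 - a * q ^ i ≠ 0) :
    qPochInf a q ≠ 0 := by
  obtain ⟨S, hS⟩ : ∃ S, HasProd (fun i : ℕ => 1 - a * q ^ i) (Complex.exp S) :=
    ⟨_, hasProd_aux a q hq ha⟩
  rw [qPochInf, hS.tprod_eq]
  exact Complex.exp_ne_zero _

private lemma qPochInf_eq_exp (a q : ℂ) (hq : ‖q‖ < 1) (ha : ∀ i : ℕ, 1 - a * q ^ i ≠ 0) :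
    qPochInf a q = Complex.exp (∑' i : ℕ, Complex.log (1 - a * q ^ i)) :=
  (hasProd_aux a q hq ha).tprod_eq

private lemma qPochInf_split (a q : ℂ) (hq : ‖q‖ < 1) (ha : ∀ i : ℕ, 1 - a * q ^ i ≠ 0)
    (k : ℕ) : qPochInf a q = qPoch a q k * qPochInf (a * q ^ k) q := by
  have ha' : ∀ i : ℕ, 1 - (a * q ^ k) * q ^ i ≠ 0 := fun i => by
    rw [mul_assoc, ← pow_add]; exact ha (k + i)
  have hs := summable_log_aux a q hq
  have hsum := hs.sum_add_tsum_nat_add k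
  have hcongr : (fun i : ℕ => Complex.log (1 - (a * q ^ k) * q ^ i))
      = fun i : ℕ => Complex.log (1 - a * q ^ (i + k)) := by
    funext i
    rw [mul_assoc, ← pow_add, add_comm k i]
  rw [qPochInf_eq_exp a q hq ha, qPochInf_eq_exp (a * q ^ k) q hq ha', hcongr, ← hsum,
    Complex.exp_add]
  congr 1
  rw [Complex.exp_sum, qPoch]
  exact Finset.prod_congr rfl fun i _ => Complex.exp_log (ha i)

theorem stmt_5 (q : ℂ) (hq : ‖q‖ < 1) :
    qPochInf (-q) (q ^ 2) / qPochInf (q ^ 2) (q ^ 2)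
        * ∑' j : ℕ, q ^ (3 * j ^ 2 + 2 * j) * (1 - q ^ (2 * j + 1))
      = ∑' j : ℕ, q ^ (3 * j ^ 2 + 2 * j) * (qPoch (-q) (q ^ 2) j / qPoch (q ^ 2) (q ^ 2) (2 * j))
          * (qPochInf (-(q ^ (2 * j + 3))) (q ^ 2) / qPochInf (q ^ (4 * j + 4)) (q ^ 2)) := by
  have hq2 : ‖q ^ 2‖ < 1 := by
    rw [norm_pow]; exact pow_lt_one₀ (norm_nonneg q) hq two_ne_zero
  have hq2le : ‖q ^ 2‖ ≤ 1 := hq2.le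
  have hpow : ∀ k : ℕ, k ≠ 0 → ‖q ^ k‖ < 1 := fun k hk => by
    rw [norm_pow]; exact pow_lt_one₀ (norm_nonneg q) hq hk
  have haA : ∀ i : ℕ, 1 - (-q) * (q ^ 2) ^ i ≠ 0 := ha_of (by simpa using hq) hq2le
  have haB : ∀ i : ℕ, 1 - (q ^ 2) * (q ^ 2) ^ i ≠ 0 := ha_of hq2 hq2le
  rw [← tsum_mul_left]
  refine tsum_congr fun j => ?_
  -- abbreviations
  set u : ℂ := q ^ (2 * j + 1) with hu
  have haT2 : ∀ i : ℕ, 1 - (q ^ (4 * j + 4)) * (q ^ 2) ^ i ≠ 0 :=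
    ha_of (hpow _ (by omega)) hq2le
  -- split the infinite products
  have hA : qPochInf (-q) (q ^ 2)
      = qPoch (-q) (q ^ 2) (j + 1) * qPochInf (-(q ^ (2 * j + 3))) (q ^ 2) := by
    have h := qPochInf_split (-q) (q ^ 2) hq2 haA (j + 1)
    have he : (-q) * (q ^ 2) ^ (j + 1) = -(q ^ (2 * j + 3)) := by
      rw [← pow_mul, neg_mul, ← pow_succ']
      congr 2
    rwa [he] at h
  have hB : qPochInf (q ^ 2) (q ^ 2)
      = qPoch (q ^ 2) (q ^ 2) (2 * j + 1) * qPochInf (q ^ (4 * j + 4)) (q ^ 2) := by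
    have h := qPochInf_split (q ^ 2) (q ^ 2) hq2 haB (2 * j + 1)
    have he : (q ^ 2) * (q ^ 2) ^ (2 * j + 1) = q ^ (4 * j + 4) := by
      rw [← pow_succ', ← pow_mul]
      congr 1
      all_goals omega
    rwa [he] at h
  -- unfold one step of each finite product
  have hPs : qPoch (-q) (q ^ 2) (j + 1) = qPoch (-q) (q ^ 2) j * (1 + u) := by
    rw [qPoch, Finset.prod_range_succ, ← qPoch]
    congr 1
    have hmu : (-q) * (q ^ 2) ^ j = -u := by
      rw [hu, ← pow_mul, neg_mul, ← pow_succ']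
    rw [hmu]
    ring
  have hQs : qPoch (q ^ 2) (q ^ 2) (2 * j + 1)
      = qPoch (q ^ 2) (q ^ 2) (2 * j) * ((1 - u) * (1 + u)) := by
    rw [qPoch, Finset.prod_range_succ, ← qPoch]
    congr 1
    have h2 : (q ^ 2) * (q ^ 2) ^ (2 * j) = u ^ 2 := by
      rw [hu, ← pow_succ', ← pow_mul, ← pow_mul]
      congr 1
      all_goals omega
    rw [h2]
    ring
  -- nonvanishing
  have hu1 : ‖u‖ < 1 := hpow _ (by omega)
  have h1mu : (1 : ℂ) - u ≠ 0 := one_sub_ne' hu1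
  have h1pu : (1 : ℂ) + u ≠ 0 := by
    have := one_sub_ne' (z := -u) (by simpa using hu1)
    simpa [sub_neg_eq_add] using this
  have hQ : qPoch (q ^ 2) (q ^ 2) (2 * j) ≠ 0 := by
    rw [qPoch]
    exact Finset.prod_ne_zero_iff.mpr fun i _ => haB i
  have hT2 : qPochInf (q ^ (4 * j + 4)) (q ^ 2) ≠ 0 := qPochInf_ne_zero hq2 haT2
  rw [hA, hB, hPs, hQs]
  field_simp
end

section
/- For all complex q with |q| < 1, the sum over n ≥ 0 of q^{n(n+1)/2} (-1;q)_n / ((q;q)_n)^2 equals (-q;q)_∞ / (q;q)_∞, where (-1;q)_0 = 1 and (-1;q)_n = 2·(-q;q)_{n-1} for n ≥ 1. -/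
lemma qPoch_succ (a q : ℂ) (n : ℕ) : qPoch a q (n+1) = qPoch a q n * (1 - a * q ^ n) :=
  Finset.prod_range_succ _ _

lemma fac_ne {q : ℂ} (hq : ‖q‖ < 1) (k : ℕ) : 1 - q * q ^ k ≠ 0 := by
  intro h
  have h1 : q * q ^ k = 1 := by linear_combination -h
  have : ‖q * q ^ k‖ < 1 := by
    calc ‖q * q ^ k‖ = ‖q‖ * ‖q‖ ^ k := by rw [norm_mul, norm_pow]
    _ ≤ ‖q‖ * 1 := by
        apply mul_le_mul_of_nonneg_left (pow_le_one₀ (norm_nonneg q) hq.le) (norm_nonneg q)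
    _ < 1 := by simpa using hq
  rw [h1] at this; simp at this

lemma qPochq_ne {q : ℂ} (hq : ‖q‖ < 1) (n : ℕ) : qPoch q q n ≠ 0 :=
  Finset.prod_ne_zero_iff.mpr fun i _ => fac_ne hq i

lemma tri (n : ℕ) : (n+1)*(n+1+1)/2 = n*(n+1)/2 + (n+1) := by
  rw [show (n+1)*(n+1+1) = n*(n+1) + (n+1)*2 by ring, Nat.add_mul_div_right _ _ (by norm_num)]

noncomputable def uu (q : ℂ) (N n : ℕ) : ℂ :=
  q ^ (n*(n+1)/2) * qPoch (-1) q n * qPoch q q N / ((qPoch q q n)^2 * qPoch q q (N-n))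

noncomputable def GG (q : ℂ) (N m : ℕ) : ℂ :=
  -(q ^ (N+1-m) * q ^ (m*(m+1)/2) * (1 - q^m)^2 * qPoch (-1) q m * qPoch q q N) /
    ((qPoch q q m)^2 * qPoch q q (N+1-m))

lemma GG_zero (q : ℂ) (N : ℕ) : GG q N 0 = 0 := by
  simp [GG, qPoch]

lemma key {q : ℂ} (hq : ‖q‖ < 1) (N n : ℕ) (hn : n ≤ N) :
    (1 - q^(N+1)) * uu q (N+1) n
      = (1 + q^(N+1)) * uu q N n + (GG q N (n+1) - GG q N n) := by
  have e1 : N+1-n = (N-n)+1 := by omega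
  have e2 : N+1-(n+1) = N-n := by omega
  have e4 : N+1 = n + (N-n) + 1 := by omega
  have e5 : N = n + (N-n) := by omega
  rw [show uu q (N+1) n = q ^ (n*(n+1)/2) * qPoch (-1) q n * qPoch q q (N+1) /
      ((qPoch q q n)^2 * qPoch q q (N+1-n)) from rfl]
  rw [show GG q N (n+1) = -(q ^ (N+1-(n+1)) * q ^ ((n+1)*(n+1+1)/2) * (1 - q^(n+1))^2 *
      qPoch (-1) q (n+1) * qPoch q q N) / ((qPoch q q (n+1))^2 * qPoch q q (N+1-(n+1))) from rfl]
  rw [uu, GG, e1, e2, tri, qPoch_succ, qPoch_succ, qPoch_succ, qPoch_succ]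
  have p1 : q^(N+1) = q^n * q^(N-n) * q := by rw [e4, pow_add, pow_add, pow_one]
  have p2 : q^N = q^n * q^(N-n) := by conv_lhs => rw [e5, pow_add]
  have p3 : q ^ (n*(n+1)/2 + (n+1)) = q ^ (n*(n+1)/2) * (q^n * q) := by
    rw [pow_add, pow_succ]
  have p4 : q^(n+1) = q^n*q := pow_succ q n
  have p5 : q^(N-n+1) = q^(N-n)*q := pow_succ q (N-n)
  rw [p3, p1, p4, p5, p2]
  have hB := qPochq_ne hq n
  have hC := qPochq_ne hq (N-n)
  have h1 := fac_ne hq n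
  have h2 := fac_ne hq (N-n)
  generalize qPoch (-1) q n = A at *
  generalize hBB : qPoch q q n = B at *
  generalize qPoch q q (N-n) = C at *
  generalize qPoch q q N = P at *
  generalize q ^ (n*(n+1)/2) = t at *
  generalize hX : q ^ n = X at *
  generalize hY : q ^ (N-n) = Y at *
  have hD1 : B^2 * (C * (1 - q*Y)) ≠ 0 :=
    mul_ne_zero (pow_ne_zero 2 hB) (mul_ne_zero hC h2)
  have hD2 : B^2 * C ≠ 0 := mul_ne_zero (pow_ne_zero 2 hB) hC
  have hD3 : (B * (1 - q*X))^2 * C ≠ 0 :=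
    mul_ne_zero (pow_ne_zero 2 (mul_ne_zero hB h1)) hC
  have hmd : ∀ (c a b : ℂ), c * (a/b) = c*a/b := fun _ _ _ => (mul_div_assoc _ _ _).symm
  rw [div_sub_div _ _ hD3 hD1, hmd, hmd, div_add_div _ _ hD2 (mul_ne_zero hD3 hD1),
    div_eq_div_iff hD1 (mul_ne_zero hD2 (mul_ne_zero hD3 hD1))]
  ring

lemma keytop {q : ℂ} (hq : ‖q‖ < 1) (N : ℕ) :
    (1 - q^(N+1)) * uu q (N+1) (N+1) = - GG q N (N+1) := by
  have hD : (qPoch q q N * (1 - q * q ^ N))^2 * qPoch q q 0 ≠ 0 := by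
    rw [show qPoch q q 0 = 1 from rfl, mul_one]
    exact pow_ne_zero 2 (mul_ne_zero (qPochq_ne hq N) (fac_ne hq N))
  have hmd : ∀ (c a b : ℂ), c * (a/b) = c*a/b := fun _ _ _ => (mul_div_assoc _ _ _).symm
  rw [uu, GG, show N+1-(N+1) = 0 by omega,
    show qPoch q q (N+1) = qPoch q q N * (1 - q * q ^ N) from qPoch_succ q q N,
    hmd, neg_div, neg_neg, div_eq_div_iff hD hD, pow_succ]
  ring

lemma fin_id {q : ℂ} (hq : ‖q‖ < 1) : ∀ N : ℕ,
    ∑ n ∈ Finset.range (N+1), uu q N n = qPoch (-q) q N / qPoch q q N := by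
  intro N
  induction N with
  | zero => simp [uu, qPoch]
  | succ N ih =>
    have hNe : (1 - q^(N+1)) ≠ 0 := by
      rw [pow_succ']; exact fac_ne hq N
    have h1 : (1 - q^(N+1)) * ∑ n ∈ Finset.range (N+2), uu q (N+1) n
        = (1 + q^(N+1)) * ∑ n ∈ Finset.range (N+1), uu q N n := by
      rw [Finset.sum_range_succ, mul_add, keytop hq N, Finset.mul_sum, Finset.mul_sum]
      have hc : ∀ n ∈ Finset.range (N+1), (1 - q^(N+1)) * uu q (N+1) n
          = (1 + q^(N+1)) * uu q N n + (GG q N (n+1) - GG q N n) := by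
        intro n hn
        exact key hq N n (by have := Finset.mem_range.mp hn; omega)
      rw [Finset.sum_congr rfl hc, Finset.sum_add_distrib, Finset.sum_range_sub (GG q N),
        GG_zero]
      ring
    have h2 : qPoch (-q) q (N+1) = qPoch (-q) q N * (1 + q^(N+1)) := by
      rw [qPoch_succ, pow_succ']; ring
    have h3 : qPoch q q (N+1) = qPoch q q N * (1 - q^(N+1)) := by
      rw [qPoch_succ, pow_succ']
    apply mul_left_cancel₀ hNe
    rw [h1, ih, h2, h3]
    have hP := qPochq_ne hq N
    field_simp

lemma fac_ne' {a q : ℂ} (ha : ‖a‖ < 1) (hq : ‖q‖ ≤ 1) (i : ℕ) : 1 - a * q ^ i ≠ 0 := by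
  intro h
  have h1 : a * q ^ i = 1 := by linear_combination -h
  have : ‖a * q ^ i‖ < 1 := by
    calc ‖a * q ^ i‖ = ‖a‖ * ‖q‖ ^ i := by rw [norm_mul, norm_pow]
    _ ≤ ‖a‖ * 1 := mul_le_mul_of_nonneg_left (pow_le_one₀ (norm_nonneg q) hq) (norm_nonneg a)
    _ < 1 := by simpa using ha
  rw [h1] at this; simp at this

lemma log_sum {a q : ℂ} (ha : ‖a‖ < 1) (hq : ‖q‖ < 1) :
    Summable fun i : ℕ => Complex.log (1 - a * q ^ i) := by
  apply Summable.of_norm_bounded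
    ((summable_geometric_of_lt_one (norm_nonneg q) hq).mul_left (‖a‖ * ((1 - ‖a‖)⁻¹ / 2 + 1)))
  intro i
  have hzn : ‖-(a * q ^ i)‖ = ‖a‖ * ‖q‖ ^ i := by rw [norm_neg, norm_mul, norm_pow]
  have hz2 : ‖a‖ * ‖q‖ ^ i ≤ ‖a‖ :=
    mul_le_of_le_one_right (norm_nonneg a) (pow_le_one₀ (norm_nonneg q) hq.le)
  have hz1 : ‖-(a * q ^ i)‖ < 1 := by rw [hzn]; exact lt_of_le_of_lt hz2 ha
  have h0 : (0:ℝ) < 1 - ‖a‖ := by linarith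
  calc ‖Complex.log (1 - a * q ^ i)‖ = ‖Complex.log (1 + -(a * q ^ i))‖ := by
        rw [sub_eq_add_neg]
    _ ≤ ‖-(a * q ^ i)‖ ^ 2 * (1 - ‖-(a * q ^ i)‖)⁻¹ / 2 + ‖-(a * q ^ i)‖ :=
        Complex.norm_log_one_add_le hz1
    _ ≤ ‖-(a * q ^ i)‖ * (1 - ‖a‖)⁻¹ / 2 + ‖-(a * q ^ i)‖ := by
        have hz0 : (0:ℝ) ≤ ‖-(a * q ^ i)‖ := norm_nonneg _
        have hlt : (0:ℝ) < 1 - ‖-(a * q ^ i)‖ := by linarith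
        have e1 : ‖-(a * q ^ i)‖ ^ 2 ≤ ‖-(a * q ^ i)‖ := by nlinarith
        have e2 : (1 - ‖-(a * q ^ i)‖)⁻¹ ≤ (1 - ‖a‖)⁻¹ := by
          gcongr
          rw [hzn]; linarith
        have e3 := mul_le_mul e1 e2 (by positivity) hz0
        linarith
    _ = (‖a‖ * ((1 - ‖a‖)⁻¹ / 2 + 1)) * ‖q‖ ^ i := by rw [hzn]; ring

lemma mult {a q : ℂ} (ha : ‖a‖ < 1) (hq : ‖q‖ < 1) :
    Multipliable fun i : ℕ => 1 - a * q ^ i :=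
  Complex.multipliable_of_summable_log (log_sum ha hq)

lemma tprod_ne {a q : ℂ} (ha : ‖a‖ < 1) (hq : ‖q‖ < 1) : qPochInf a q ≠ 0 := by
  have h2 := Complex.cexp_tsum_eq_tprod (f := fun i => 1 - a * q ^ i)
    (fun i => fac_ne' ha hq.le i) (log_sum ha hq)
  rw [qPochInf, ← h2]
  exact Complex.exp_ne_zero _

lemma tendsto_qPoch {a q : ℂ} (ha : ‖a‖ < 1) (hq : ‖q‖ < 1) :
    Filter.Tendsto (fun N => qPoch a q N) Filter.atTop (nhds (qPochInf a q)) :=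
  (mult ha hq).hasProd.tendsto_prod_nat

lemma prod_norm_le_two_pow {q : ℂ} (hq : ‖q‖ < 1) (n : ℕ) (g : ℕ → ℕ) :
    ‖∏ i ∈ Finset.range n, (1 - q * q ^ (g i))‖ ≤ 2 ^ n := by
  calc ‖∏ i ∈ Finset.range n, (1 - q * q ^ (g i))‖
      ≤ ∏ i ∈ Finset.range n, ‖(1 - q * q ^ (g i))‖ := le_of_eq (norm_prod _ _)
    _ ≤ ∏ _i ∈ Finset.range n, (2:ℝ) := by
        apply Finset.prod_le_prod (fun _ _ => norm_nonneg _)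
        intro i _
        calc ‖(1 - q * q ^ (g i))‖ ≤ ‖(1:ℂ)‖ + ‖q * q ^ (g i)‖ := norm_sub_le _ _
          _ ≤ 1 + 1 := by
              rw [norm_one, norm_mul, norm_pow]
              have : ‖q‖ * ‖q‖ ^ (g i) ≤ 1 :=
                mul_le_one₀ hq.le (pow_nonneg (norm_nonneg q) _)
                  (pow_le_one₀ (norm_nonneg q) hq.le)
              linarith
          _ = 2 := by norm_num
    _ = 2 ^ n := by rw [Finset.prod_const, Finset.card_range]

lemma normA_le {q : ℂ} (hq : ‖q‖ < 1) (n : ℕ) : ‖qPoch (-1) q n‖ ≤ 2 ^ n := by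
  calc ‖qPoch (-1) q n‖ ≤ ∏ i ∈ Finset.range n, ‖(1 - (-1) * q ^ i)‖ := le_of_eq (norm_prod _ _)
    _ ≤ ∏ _i ∈ Finset.range n, (2:ℝ) := by
        apply Finset.prod_le_prod (fun _ _ => norm_nonneg _)
        intro i _
        calc ‖(1 - (-1) * q ^ i)‖ ≤ ‖(1:ℂ)‖ + ‖(-1:ℂ) * q ^ i‖ := norm_sub_le _ _
          _ ≤ 1 + 1 := by
              rw [norm_one, norm_mul, norm_neg, norm_one, one_mul, norm_pow]
              have := pow_le_one₀ (norm_nonneg q) hq.le (n := i)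
              linarith
          _ = 2 := by norm_num
    _ = 2 ^ n := by rw [Finset.prod_const, Finset.card_range]

lemma normB_ge {q : ℂ} (hq : ‖q‖ < 1) (n : ℕ) : (1 - ‖q‖) ^ n ≤ ‖qPoch q q n‖ := by
  calc (1 - ‖q‖) ^ n = ∏ _i ∈ Finset.range n, (1 - ‖q‖) := by
        rw [Finset.prod_const, Finset.card_range]
    _ ≤ ∏ i ∈ Finset.range n, ‖(1 - q * q ^ i)‖ := by
        apply Finset.prod_le_prod (fun _ _ => by linarith)
        intro i _
        calc 1 - ‖q‖ ≤ 1 - ‖q * q ^ i‖ := by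
              rw [norm_mul, norm_pow]
              have : ‖q‖ * ‖q‖ ^ i ≤ ‖q‖ :=
                mul_le_of_le_one_right (norm_nonneg q) (pow_le_one₀ (norm_nonneg q) hq.le)
              linarith
          _ ≤ ‖(1 : ℂ) - q * q ^ i‖ := by
              have := norm_sub_norm_le (1:ℂ) (q * q ^ i)
              rw [norm_one] at this
              linarith
    _ = ‖qPoch q q n‖ := by
        rw [qPoch, norm_prod]

lemma uu_eq {q : ℂ} (hq : ‖q‖ < 1) {N n : ℕ} (hn : n ≤ N) :
    uu q N n = q ^ (n*(n+1)/2) * qPoch (-1) q n *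
      (∏ i ∈ Finset.range n, (1 - q * q ^ ((N-n) + i))) / (qPoch q q n)^2 := by
  have hsplit : qPoch q q N
      = qPoch q q (N-n) * ∏ i ∈ Finset.range n, (1 - q * q ^ ((N-n) + i)) := by
    rw [qPoch, qPoch, ← Finset.prod_range_add, show N - n + n = N from by omega]
  rw [uu, hsplit]
  have hC := qPochq_ne hq (N-n)
  have hB := qPochq_ne hq n
  field_simp

lemma uu_bound {q : ℂ} (hq : ‖q‖ < 1) {N n : ℕ} (hn : n ≤ N) :
    ‖uu q N n‖ ≤ ‖q‖ ^ (n*(n+1)/2) * 4 ^ n / (1 - ‖q‖) ^ (2*n) := by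
  have h1r : (0:ℝ) < 1 - ‖q‖ := by linarith
  rw [uu_eq hq hn, norm_div, norm_mul, norm_mul, norm_pow, norm_pow]
  apply div_le_div₀ (by positivity)
  · calc ‖q‖ ^ (n*(n+1)/2) * ‖qPoch (-1) q n‖ *
        ‖∏ i ∈ Finset.range n, (1 - q * q ^ ((N-n) + i))‖
        ≤ ‖q‖ ^ (n*(n+1)/2) * 2 ^ n * 2 ^ n := by
          apply mul_le_mul _ (prod_norm_le_two_pow hq n _) (norm_nonneg _) (by positivity)
          exact mul_le_mul_of_nonneg_left (normA_le hq n) (by positivity)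
      _ = ‖q‖ ^ (n*(n+1)/2) * 4 ^ n := by ring_nf; rw [show (4:ℝ) = 2*2 by norm_num, mul_pow]; ring
  · positivity
  · calc (1 - ‖q‖) ^ (2*n) = ((1 - ‖q‖) ^ n) ^ 2 := by rw [← pow_mul, mul_comm]
      _ ≤ ‖qPoch q q n‖ ^ 2 := by
          apply pow_le_pow_left₀ (by positivity) (normB_ge hq n)

lemma bnd_summable {q : ℂ} (hq : ‖q‖ < 1) :
    Summable (fun n => ‖q‖ ^ (n*(n+1)/2) * 4 ^ n / (1 - ‖q‖) ^ (2*n) : ℕ → ℝ) := by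
  have h1r : (0:ℝ) < 1 - ‖q‖ := by linarith
  apply summable_of_ratio_norm_eventually_le (r := 1/2) (by norm_num)
  have ht : Filter.Tendsto (fun n : ℕ => ‖q‖ ^ (n+1) * 4 / (1 - ‖q‖)^2)
      Filter.atTop (nhds 0) := by
    have h0 : Filter.Tendsto (fun n : ℕ => ‖q‖ ^ (n+1)) Filter.atTop (nhds 0) :=
      (tendsto_pow_atTop_nhds_zero_of_lt_one (norm_nonneg q) hq).comp
        (Filter.tendsto_add_atTop_nat 1)
    have := (h0.mul_const 4).div_const ((1 - ‖q‖)^2)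
    simpa using this
  have hev : ∀ᶠ n in Filter.atTop, ‖q‖ ^ (n+1) * 4 / (1 - ‖q‖)^2 < 1/2 :=
    ht.eventually_lt_const (by norm_num)
  filter_upwards [hev] with n hn
  have hb0 : (0:ℝ) ≤ ‖q‖ ^ (n*(n+1)/2) * 4 ^ n / (1 - ‖q‖) ^ (2*n) := by positivity
  have hb1 : (0:ℝ) ≤ ‖q‖ ^ ((n+1)*(n+1+1)/2) * 4 ^ (n+1) / (1 - ‖q‖) ^ (2*(n+1)) := by
    positivity
  rw [Real.norm_of_nonneg hb1, Real.norm_of_nonneg hb0]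
  have heq : ‖q‖ ^ ((n+1)*(n+1+1)/2) * 4 ^ (n+1) / (1 - ‖q‖) ^ (2*(n+1))
      = (‖q‖ ^ (n+1) * 4 / (1 - ‖q‖)^2) *
        (‖q‖ ^ (n*(n+1)/2) * 4 ^ n / (1 - ‖q‖) ^ (2*n)) := by
    rw [tri, pow_add, pow_succ, show 2*(n+1) = 2*n + 2 from by ring, pow_add]
    field_simp
    ring
  rw [heq]
  exact mul_le_mul_of_nonneg_right hn.le hb0

theorem stmt_6 (q : ℂ) (hq : ‖q‖ < 1) :
    ∑' n : ℕ, q ^ (n * (n + 1) / 2) * qPoch (-1) q n / (qPoch q q n) ^ 2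
      = qPochInf (-q) q / qPochInf q q := by
  classical
  have hq' : ‖-q‖ < 1 := by rwa [norm_neg]
  set c : ℕ → ℂ := fun n => q ^ (n * (n + 1) / 2) * qPoch (-1) q n / (qPoch q q n) ^ 2
    with hc
  set F : ℕ → ℕ → ℂ := fun N n => if n ≤ N then uu q N n else 0 with hF
  have hDne := tprod_ne hq hq
  have htD := tendsto_qPoch hq hq
  have htE := tendsto_qPoch hq' hq
  have hFsum : ∀ N, ∑' n, F N n = qPoch (-q) q N / qPoch q q N := by
    intro N
    rw [tsum_eq_sum (s := Finset.range (N+1))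
      (fun n hn => if_neg (by simp at hn; omega))]
    rw [← fin_id hq N]
    apply Finset.sum_congr rfl
    intro n hn
    have hn' : n ≤ N := by simp at hn; omega
    simp [hF, hn']
  have tend1 : Filter.Tendsto (fun N => ∑' n, F N n) Filter.atTop
      (nhds (qPochInf (-q) q / qPochInf q q)) := by
    have := (htE.div htD hDne)
    apply Filter.Tendsto.congr _ this
    intro N
    rw [hFsum N]
    rfl
  have tend2 : Filter.Tendsto (fun N => ∑' n, F N n) Filter.atTop (nhds (∑' n, c n)) := by
    apply tendsto_tsum_of_dominated_convergence
      (bound := fun n => ‖q‖ ^ (n*(n+1)/2) * 4 ^ n / (1 - ‖q‖) ^ (2*n)) (bnd_summable hq)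
    · intro n
      have huu : ∀ N, n ≤ N → uu q N n = c n * qPoch q q N / qPoch q q (N - n) := by
        intro N hN
        rw [uu, hc, div_mul_eq_mul_div, div_div]
      have hev : ∀ᶠ N in Filter.atTop, c n * qPoch q q N / qPoch q q (N - n) = F N n := by
        filter_upwards [Filter.eventually_ge_atTop n] with N hN
        simp only [hF, if_pos hN]
        exact (huu N hN).symm
      apply Filter.Tendsto.congr' hev
      have h2 : Filter.Tendsto (fun N => c n * qPoch q q N / qPoch q q (N - n))
          Filter.atTop (nhds (c n * qPochInf q q / qPochInf q q)) := by
        exact (Filter.Tendsto.mul tendsto_const_nhds htD).div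
          (htD.comp (Filter.tendsto_sub_atTop_nat n)) hDne
      rw [mul_div_assoc, div_self hDne, mul_one] at h2
      exact h2
    · filter_upwards with N
      intro n
      by_cases hn : n ≤ N
      · simp only [hF, if_pos hn]
        exact uu_bound hq hn
      · simp only [hF, if_neg hn, norm_zero]
        have h1r : (0:ℝ) < 1 - ‖q‖ := by linarith
        positivity
  exact tendsto_nhds_unique tend2 tend1
end
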